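/- Let (X,d) be a metric space equipped with a Borel measure μ, let x ∈ X, R > 0 and n ≥ 1 a real number. Assume that 0 < μ(B(x,r)) < ∞ for all 0 < r ≤ R and that the volume doubling property holds: μ(B(x,r₂))/r₂ⁿ ≤ 2·μ(B(x,r₁))/r₁ⁿ for all 0 < r₁ < r₂ ≤ R. Let v : X → ℝ be a measurable function that is positive and bounded on B(x,R), and suppose there are constants K₁ > 0, K₂ ≥ 0 and t > s > 0 such that for every δ with 0 < δ ≤ 1/2 and every θ with 1/2 ≤ θ ≤ 4/5 − δ one has ess sup_{B(x,θR)} v ≤ (K₁·δ^{−K₂})^{1/t} · ( μ(B(x,(θ+δ)R))⁻¹ ∫_{B(x,(θ+δ)R)} v^t dμ )^{1/t}. Then for every τ with 0 < τ ≤ 3/10 there exists a constant C > 0, depending only on K₁, K₂, n, s, t and τ, such that ess sup_{B(x,(4/5−τ)R)} v ≤ C · ( μ(B(x,R))⁻¹ ∫_{B(x,R)} v^s dμ )^{1/s}. -/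

import Mathlib

open MeasureTheory Metric Filter Finset
private lemma measurable_rpow_const' (t : ℝ) : Measurable fun x : ℝ => x ^ t := by
  have h : (fun x : ℝ => x ^ t) = fun x =>
      if x < 0 then Real.exp (Real.log x * t) * Real.cos (t * Real.pi)
      else if x = 0 then (if t = 0 then 1 else 0) else Real.exp (Real.log x * t) := by
    ext x
    rcases lt_trichotomy x 0 with h | h | h
    · rw [if_pos h]; exact Real.rpow_def_of_neg h t
    · simp [h, Real.rpow_def_of_nonneg le_rfl]
    · rw [if_neg (not_lt.2 h.le), if_neg h.ne', Real.rpow_def_of_pos h]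
  rw [h]
  refine Measurable.ite (measurableSet_lt measurable_id measurable_const)
    ((Real.measurable_exp.comp (Real.measurable_log.mul measurable_const)).mul measurable_const)
    (Measurable.ite (MeasurableSet.singleton 0 : MeasurableSet {x : ℝ | x = 0}) measurable_const
      (Real.measurable_exp.comp (Real.measurable_log.mul measurable_const)))

private lemma aux_iter (a b β σ Q Mstar : ℝ) (M : ℕ → ℝ)
    (ha : 1 ≤ a) (hb : 1 ≤ b) (hβ0 : 0 < β) (hβ1 : β < 1)
    (hσ : 0 < σ) (hQ : 0 ≤ Q) (hMstar : 1 ≤ Mstar)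
    (hM0 : ∀ k, 0 ≤ M k) (hMs : ∀ k, M k ≤ Mstar)
    (hstep : ∀ k, M k ≤ a * b ^ k * M (k + 1) ^ β * Q ^ σ) :
    M 0 ≤ a ^ (1 - β)⁻¹ * b ^ (β / (1 - β) ^ 2) * Q ^ (σ * (1 - β)⁻¹) := by
  have ha0 : (0:ℝ) < a := lt_of_lt_of_le one_pos ha
  have hb0 : (0:ℝ) < b := lt_of_lt_of_le one_pos hb
  have key : ∀ N : ℕ, M 0 ≤ a ^ (∑ k ∈ range N, β ^ k) * b ^ (∑ k ∈ range N, (k : ℝ) * β ^ k)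
      * Q ^ (σ * ∑ k ∈ range N, β ^ k) * M N ^ (β ^ N) := by
    intro N
    induction N with
    | zero => simp
    | succ N ih =>
      have hMN : M N ^ (β ^ N) ≤ (a * b ^ N * M (N + 1) ^ β * Q ^ σ) ^ (β ^ N) :=
        Real.rpow_le_rpow (hM0 N) (hstep N) (pow_nonneg hβ0.le N)
      have hexpand : (a * b ^ N * M (N + 1) ^ β * Q ^ σ) ^ (β ^ N)
          = a ^ (β ^ N) * b ^ ((N : ℝ) * β ^ N) * Q ^ (σ * β ^ N) * M (N + 1) ^ (β ^ (N + 1)) := by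
        rw [Real.mul_rpow (mul_nonneg (mul_nonneg ha0.le (by positivity))
              (Real.rpow_nonneg (hM0 (N + 1)) β)) (Real.rpow_nonneg hQ σ),
            Real.mul_rpow (mul_nonneg ha0.le (by positivity)) (Real.rpow_nonneg (hM0 (N + 1)) β),
            Real.mul_rpow ha0.le (by positivity),
            ← Real.rpow_natCast b N, ← Real.rpow_mul hb0.le,
            ← Real.rpow_mul (hM0 (N + 1)), ← Real.rpow_mul hQ]
        have h1 : β * β ^ N = β ^ (N + 1) := (pow_succ' β N).symm
        rw [h1]
        ring_nf
      calc M 0 ≤ a ^ (∑ k ∈ range N, β ^ k) * b ^ (∑ k ∈ range N, (k : ℝ) * β ^ k)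
          * Q ^ (σ * ∑ k ∈ range N, β ^ k) * M N ^ (β ^ N) := ih
        _ ≤ a ^ (∑ k ∈ range N, β ^ k) * b ^ (∑ k ∈ range N, (k : ℝ) * β ^ k)
          * Q ^ (σ * ∑ k ∈ range N, β ^ k)
          * (a ^ (β ^ N) * b ^ ((N : ℝ) * β ^ N) * Q ^ (σ * β ^ N) * M (N + 1) ^ (β ^ (N + 1))) := by
            refine mul_le_mul_of_nonneg_left (hMN.trans_eq hexpand) (by positivity)
        _ = a ^ (∑ k ∈ range (N + 1), β ^ k) * b ^ (∑ k ∈ range (N + 1), (k : ℝ) * β ^ k)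
          * Q ^ (σ * ∑ k ∈ range (N + 1), β ^ k) * M (N + 1) ^ (β ^ (N + 1)) := by
            have hz : σ * ∑ k ∈ range N, β ^ k + σ * β ^ N ≠ 0 :=
              ne_of_gt (add_pos_of_nonneg_of_pos
                (mul_nonneg hσ.le (sum_nonneg fun k _ => pow_nonneg hβ0.le k))
                (mul_pos hσ (pow_pos hβ0 N)))
            rw [sum_range_succ, sum_range_succ, Real.rpow_add ha0, Real.rpow_add hb0,
                mul_add σ, Real.rpow_add' hQ hz]
            ring
  -- limits
  have hgeom : HasSum (fun k : ℕ => β ^ k) (1 - β)⁻¹ := hasSum_geometric_of_lt_one hβ0.le hβ1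
  have hcoe : HasSum (fun k : ℕ => (k : ℝ) * β ^ k) (β / (1 - β) ^ 2) :=
    hasSum_coe_mul_geometric_of_norm_lt_one (by rw [Real.norm_eq_abs, abs_of_pos hβ0]; exact hβ1)
  have hbound : ∀ N : ℕ, M 0 ≤ a ^ (1 - β)⁻¹ * b ^ (β / (1 - β) ^ 2)
      * (Q ^ (σ * ∑ k ∈ range N, β ^ k) * Mstar ^ (β ^ N)) := by
    intro N
    have h1 : a ^ (∑ k ∈ range N, β ^ k) ≤ a ^ (1 - β)⁻¹ :=
      Real.rpow_le_rpow_of_exponent_le ha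
        (sum_le_hasSum (range N) (fun k _ => pow_nonneg hβ0.le k) hgeom)
    have h2 : b ^ (∑ k ∈ range N, (k : ℝ) * β ^ k) ≤ b ^ (β / (1 - β) ^ 2) :=
      Real.rpow_le_rpow_of_exponent_le hb
        (sum_le_hasSum (range N) (fun k _ => mul_nonneg (Nat.cast_nonneg k) (pow_nonneg hβ0.le k)) hcoe)
    have h3 : M N ^ (β ^ N) ≤ Mstar ^ (β ^ N) :=
      Real.rpow_le_rpow (hM0 N) (hMs N) (pow_nonneg hβ0.le N)
    calc M 0 ≤ a ^ (∑ k ∈ range N, β ^ k) * b ^ (∑ k ∈ range N, (k : ℝ) * β ^ k)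
        * Q ^ (σ * ∑ k ∈ range N, β ^ k) * M N ^ (β ^ N) := key N
      _ ≤ a ^ (1 - β)⁻¹ * b ^ (β / (1 - β) ^ 2) * Q ^ (σ * ∑ k ∈ range N, β ^ k)
          * Mstar ^ (β ^ N) := by
          have hq : (0:ℝ) ≤ Q ^ (σ * ∑ k ∈ range N, β ^ k) := Real.rpow_nonneg hQ _
          have := mul_le_mul (mul_le_mul (mul_le_mul h1 h2 (Real.rpow_nonneg hb0.le _)
            (Real.rpow_nonneg ha0.le _)) le_rfl hq (by positivity)) h3
            (Real.rpow_nonneg (hM0 N) _) (by positivity)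
          exact this
      _ = _ := by ring
  have htend : Tendsto (fun N : ℕ => a ^ (1 - β)⁻¹ * b ^ (β / (1 - β) ^ 2)
      * (Q ^ (σ * ∑ k ∈ range N, β ^ k) * Mstar ^ (β ^ N)))
      atTop (nhds (a ^ (1 - β)⁻¹ * b ^ (β / (1 - β) ^ 2) * (Q ^ (σ * (1 - β)⁻¹) * 1))) := by
    refine tendsto_const_nhds.mul (Tendsto.mul ?_ ?_)
    · exact Filter.Tendsto.rpow tendsto_const_nhds
        (Tendsto.const_mul σ hgeom.tendsto_sum_nat) (Or.inr (mul_pos hσ (inv_pos.2 (by linarith))))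
    · have := Filter.Tendsto.rpow (tendsto_const_nhds (x := Mstar))
        (tendsto_pow_atTop_nhds_zero_of_lt_one hβ0.le hβ1)
        (Or.inl (ne_of_gt (lt_of_lt_of_le one_pos hMstar)))
      simpa using this
  have := ge_of_tendsto' htend hbound
  calc M 0 ≤ _ := this
    _ = a ^ (1 - β)⁻¹ * b ^ (β / (1 - β) ^ 2) * Q ^ (σ * (1 - β)⁻¹) := by ring

set_option maxHeartbeats 1000000 in
theorem stmt11 (n K₁ K₂ s t τ : ℝ) (hn : 1 ≤ n) (hK₁ : 0 < K₁) (hK₂ : 0 ≤ K₂)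
    (hs : 0 < s) (hst : s < t) (hτ : 0 < τ) (hτ' : τ ≤ 3 / 10) :
    ∃ C > 0, ∀ (X : Type) [MetricSpace X] [MeasurableSpace X] [BorelSpace X]
      (μ : Measure X) (x : X) (R : ℝ) (v : X → ℝ),
      0 < R →
      (∀ r : ℝ, 0 < r → r ≤ R → 0 < μ (ball x r) ∧ μ (ball x r) < ⊤) →
      (∀ r₁ r₂ : ℝ, 0 < r₁ → r₁ < r₂ → r₂ ≤ R →
        (μ (ball x r₂)).toReal / r₂ ^ n ≤ 2 * (μ (ball x r₁)).toReal / r₁ ^ n) →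
      Measurable v →
      (∀ y ∈ ball x R, 0 < v y) →
      (∃ M : ℝ, ∀ y ∈ ball x R, v y ≤ M) →
      (∀ δ θ : ℝ, 0 < δ → δ ≤ 1 / 2 → 1 / 2 ≤ θ → θ ≤ 4 / 5 - δ →
        essSup v (μ.restrict (ball x (θ * R))) ≤
          (K₁ * δ ^ (-K₂)) ^ (1 / t) *
            ((μ (ball x ((θ + δ) * R))).toReal⁻¹ *
              ∫ y in ball x ((θ + δ) * R), v y ^ t ∂μ) ^ (1 / t)) →
      essSup v (μ.restrict (ball x ((4 / 5 - τ) * R))) ≤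
        C * ((μ (ball x R)).toReal⁻¹ * ∫ y in ball x R, v y ^ s ∂μ) ^ (1 / s) := by
  have ht : 0 < t := hs.trans hst
  set β : ℝ := 1 - s / t with hβdef
  have hst1 : s / t < 1 := (div_lt_one ht).2 hst
  have hst0 : 0 < s / t := div_pos hs ht
  have hβ0 : 0 < β := by rw [hβdef]; linarith
  have hβ1 : β < 1 := by rw [hβdef]; linarith
  set a : ℝ := max ((K₁ * (τ / 2) ^ (-K₂) * (2:ℝ) ^ (n + 1)) ^ (1 / t)) 1 with hadef
  set b : ℝ := (2:ℝ) ^ (K₂ / t) with hbdef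
  have ha : 1 ≤ a := le_max_right _ _
  have hb : 1 ≤ b := by
    rw [hbdef]
    calc (1:ℝ) = (2:ℝ) ^ (0:ℝ) := (Real.rpow_zero 2).symm
      _ ≤ (2:ℝ) ^ (K₂ / t) := Real.rpow_le_rpow_of_exponent_le one_le_two (by positivity)
  have ha0 : (0:ℝ) < a := lt_of_lt_of_le one_pos ha
  have hb0 : (0:ℝ) < b := lt_of_lt_of_le one_pos hb
  refine ⟨a ^ (1 - β)⁻¹ * b ^ (β / (1 - β) ^ 2),
    mul_pos (Real.rpow_pos_of_pos ha0 _) (Real.rpow_pos_of_pos hb0 _), ?_⟩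
  intro X _ _ _ μ x R v hR hball hdoub hmv hvpos hMbd hyp
  obtain ⟨M, hM⟩ := hMbd
  set θ : ℕ → ℝ := fun k => 4 / 5 - τ / 2 ^ k with hθdef
  set Q : ℝ := (μ (ball x R)).toReal⁻¹ * ∫ y in ball x R, v y ^ s ∂μ with hQdef
  set Mstar : ℝ := max M 1 with hMstardef
  set Mk : ℕ → ℝ := fun k => max (essSup v (μ.restrict (ball x (θ k * R)))) 0 with hMkdef
  have hMstar1 : 1 ≤ Mstar := le_max_right _ _
  have h2k : ∀ k : ℕ, τ / 2 ^ k ≤ τ := fun k =>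
    div_le_self hτ.le (one_le_pow₀ one_le_two)
  have hθhalf : ∀ k : ℕ, 1 / 2 ≤ θ k := by
    intro k; have := h2k k; rw [hθdef]; dsimp only; linarith
  have hθlt : ∀ k : ℕ, θ k < 1 := by
    intro k
    have : 0 < τ / 2 ^ k := by positivity
    rw [hθdef]; dsimp only; linarith
  have hθpos : ∀ k : ℕ, 0 < θ k := fun k => lt_of_lt_of_le (by norm_num) (hθhalf k)
  have hrpos : ∀ k : ℕ, 0 < θ k * R := fun k => mul_pos (hθpos k) hR
  have hrle : ∀ k : ℕ, θ k * R ≤ R := fun k => by nlinarith [hθlt k, hR]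
  -- nonnegativity of Q
  have hQ0 : 0 ≤ Q := by
    rw [hQdef]
    refine mul_nonneg (inv_nonneg.2 ENNReal.toReal_nonneg)
      (setIntegral_nonneg measurableSet_ball fun y hy => Real.rpow_nonneg (hvpos y hy).le s)
  -- finiteness of restricted measures
  have hfin : ∀ r : ℝ, 0 < r → r ≤ R → IsFiniteMeasure (μ.restrict (ball x r)) := by
    intro r h1 h2
    constructor
    rw [Measure.restrict_apply_univ]
    exact (hball r h1 h2).2
  -- integrability
  have hint : ∀ r : ℝ, 0 < r → r ≤ R → ∀ e : ℝ, 0 ≤ e →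
      IntegrableOn (fun y => v y ^ e) (ball x r) μ := by
    intro r h1 h2 e he
    haveI := hfin r h1 h2
    refine Integrable.mono' (integrable_const (Mstar ^ e))
      ((measurable_rpow_const' e).comp hmv).aestronglyMeasurable ?_
    refine (ae_restrict_iff' measurableSet_ball).2 (ae_of_all _ fun y hy => ?_)
    have hy' : y ∈ ball x R := ball_subset_ball h2 hy
    have h0 : 0 < v y := hvpos y hy'
    have hle : v y ≤ Mstar := (hM y hy').trans (le_max_left _ _)
    rw [Real.norm_of_nonneg (Real.rpow_nonneg h0.le _)]
    exact Real.rpow_le_rpow h0.le hle he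
  -- essSup upper bound
  have hessle : ∀ r : ℝ, 0 < r → r ≤ R → essSup v (μ.restrict (ball x r)) ≤ Mstar := by
    intro r h1 h2
    haveI : (ae (μ.restrict (ball x r))).NeBot := by
      rw [ae_neBot]
      intro h0
      have hpos := (hball r h1 h2).1
      rw [← Measure.restrict_apply_self, h0] at hpos
      simp at hpos
    have hbd : IsBoundedUnder (· ≥ ·) (ae (μ.restrict (ball x r))) v :=
      ⟨0, eventually_map.2 ((ae_restrict_iff' measurableSet_ball).2
        (ae_of_all _ fun y hy => (hvpos y (ball_subset_ball h2 hy)).le))⟩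
    exact limsup_le_of_le hbd.isCoboundedUnder_le ((ae_restrict_iff' measurableSet_ball).2
      (ae_of_all _ fun y hy => (hM y (ball_subset_ball h2 hy)).trans (le_max_left _ _)))
  have hMk0 : ∀ k, 0 ≤ Mk k := fun k => le_max_right _ _
  have hMks : ∀ k, Mk k ≤ Mstar := fun k =>
    max_le (hessle _ (hrpos k) (hrle k)) (le_trans zero_le_one hMstar1)
  -- volume comparison
  have hvol : ∀ c : ℝ, 1 / 2 ≤ c → c < 1 →
      (μ (ball x R)).toReal ≤ (2:ℝ) ^ (n + 1) * (μ (ball x (c * R))).toReal := by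
    intro c hc1 hc2
    have hc0 : (0:ℝ) < c := by linarith
    have hr1 : 0 < c * R := mul_pos hc0 hR
    have hd := hdoub (c * R) R hr1 (by nlinarith) le_rfl
    have hRn : (0:ℝ) < R ^ n := Real.rpow_pos_of_pos hR n
    have hcn : (0:ℝ) < c ^ n := Real.rpow_pos_of_pos hc0 n
    have hcrn : (c * R) ^ n = c ^ n * R ^ n := Real.mul_rpow hc0.le hR.le
    rw [div_le_div_iff₀ hRn (by rw [hcrn]; positivity)] at hd
    rw [hcrn, ← mul_assoc] at hd
    have hd' : (μ (ball x R)).toReal * c ^ n ≤ 2 * (μ (ball x (c * R))).toReal :=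
      le_of_mul_le_mul_right (by linarith [hd]) hRn
    have hp0 : (0:ℝ) < ((1:ℝ)/2) ^ n := Real.rpow_pos_of_pos (by norm_num) n
    have hple : ((1:ℝ)/2) ^ n ≤ c ^ n := Real.rpow_le_rpow (by norm_num) hc1 (by linarith)
    have hkey : (2:ℝ) ^ (n + 1) * ((1:ℝ)/2) ^ n = 2 := by
      rw [one_div, Real.inv_rpow (by norm_num : (0:ℝ) ≤ 2), ← Real.rpow_neg (by norm_num),
        ← Real.rpow_add two_pos]
      norm_num
    nlinarith [ENNReal.toReal_nonneg (a := μ (ball x R)),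
      ENNReal.toReal_nonneg (a := μ (ball x (c * R))),
      mul_le_mul_of_nonneg_left hple (ENNReal.toReal_nonneg (a := μ (ball x R)))]
  -- geometric constant bound
  have hA : ∀ k : ℕ, (K₁ * (τ / 2 ^ (k + 1)) ^ (-K₂)) ^ (1 / t) * ((2:ℝ) ^ (n + 1)) ^ (1 / t)
      ≤ a * b ^ k := by
    intro k
    induction k with
    | zero =>
      rw [← Real.mul_rpow (by positivity) (by positivity)]
      have : τ / 2 ^ (0 + 1) = τ / 2 := by norm_num
      rw [this, pow_zero, mul_one, hadef]
      exact le_max_left _ _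
    | succ k ih =>
      have hsplit : (τ / 2 ^ (k + 1 + 1)) ^ (-K₂) = (τ / 2 ^ (k + 1)) ^ (-K₂) * (2:ℝ) ^ K₂ := by
        have h2 : τ / 2 ^ (k + 1 + 1) = τ / 2 ^ (k + 1) / 2 := by rw [pow_succ]; ring
        rw [h2, div_eq_mul_inv (τ / 2 ^ (k + 1)),
          Real.mul_rpow (by positivity) (by positivity),
          Real.inv_rpow (by norm_num : (0:ℝ) ≤ 2), ← Real.rpow_neg (by norm_num), neg_neg]
      have h2K : ((2:ℝ) ^ K₂) ^ (1 / t) = b := by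
        rw [hbdef, ← Real.rpow_mul (by norm_num : (0:ℝ) ≤ 2)]
        congr 1
        field_simp
      calc (K₁ * (τ / 2 ^ (k + 1 + 1)) ^ (-K₂)) ^ (1 / t) * ((2:ℝ) ^ (n + 1)) ^ (1 / t)
          = (K₁ * (τ / 2 ^ (k + 1)) ^ (-K₂)) ^ (1 / t) * ((2:ℝ) ^ (n + 1)) ^ (1 / t)
            * ((2:ℝ) ^ K₂) ^ (1 / t) := by
            rw [hsplit, ← mul_assoc, Real.mul_rpow (by positivity) (by positivity)]
            ring
        _ ≤ a * b ^ k * b := by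
            rw [h2K]
            exact mul_le_mul_of_nonneg_right ih hb0.le
        _ = a * b ^ (k + 1) := by ring
  -- the step inequality
  have hstep : ∀ k : ℕ, Mk k ≤ a * b ^ k * Mk (k + 1) ^ β * Q ^ (1 / t) := by
    intro k
    have hδpos : 0 < τ / 2 ^ (k + 1) := by positivity
    have hδle : τ / 2 ^ (k + 1) ≤ 1 / 2 := le_trans (h2k (k + 1)) (by linarith)
    have hθk' : θ k ≤ 4 / 5 - τ / 2 ^ (k + 1) := by
      rw [hθdef]; dsimp only
      have : τ / 2 ^ (k + 1) ≤ τ / 2 ^ k := by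
        apply div_le_div_of_nonneg_left hτ.le (by positivity)
        exact pow_le_pow_right₀ (by norm_num) (Nat.le_succ k)
      linarith
    have hsum : θ k + τ / 2 ^ (k + 1) = θ (k + 1) := by
      rw [hθdef]; dsimp only
      have h2 : (2:ℝ) ^ (k + 1) = 2 ^ k * 2 := pow_succ 2 k
      field_simp
      ring
    have h1 := hyp (τ / 2 ^ (k + 1)) (θ k) hδpos hδle (hθhalf k) hθk'
    rw [hsum] at h1
    -- notation
    set r' : ℝ := θ (k + 1) * R with hr'def
    have hr'0 : 0 < r' := hrpos (k + 1)
    have hr'R : r' ≤ R := hrle (k + 1)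
    haveI : (ae (μ.restrict (ball x r'))).NeBot := by
      rw [ae_neBot]
      intro h0
      have hpos := (hball r' hr'0 hr'R).1
      rw [← Measure.restrict_apply_self, h0] at hpos
      simp at hpos
    -- a.e. bound on v over B'
    have hbdd : IsBoundedUnder (· ≤ ·) (ae (μ.restrict (ball x r'))) v :=
      ⟨Mstar, eventually_map.2 ((ae_restrict_iff' measurableSet_ball).2
        (ae_of_all _ fun y hy => (hM y (ball_subset_ball hr'R hy)).trans (le_max_left _ _)))⟩
    have hae1 : ∀ᵐ y ∂μ.restrict (ball x r'), v y ≤ Mk (k + 1) := by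
      filter_upwards [ae_le_essSup hbdd] with y hy
      exact hy.trans (le_max_left _ _)
    have hptw : ∀ᵐ y ∂μ.restrict (ball x r'), v y ^ t ≤ Mk (k + 1) ^ (t - s) * v y ^ s := by
      filter_upwards [hae1, ae_restrict_mem measurableSet_ball] with y h1' h2'
      have h0 : 0 < v y := hvpos y (ball_subset_ball hr'R h2')
      have heq : v y ^ t = v y ^ (t - s) * v y ^ s := by
        rw [← Real.rpow_add h0]; ring_nf
      rw [heq]
      exact mul_le_mul_of_nonneg_right
        (Real.rpow_le_rpow h0.le h1' (by linarith)) (Real.rpow_nonneg h0.le s)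
    have hI : ∫ y in ball x r', v y ^ t ∂μ
        ≤ Mk (k + 1) ^ (t - s) * ∫ y in ball x r', v y ^ s ∂μ := by
      have h := integral_mono_ae (hint r' hr'0 hr'R t ht.le)
        ((hint r' hr'0 hr'R s hs.le).const_mul (Mk (k + 1) ^ (t - s))) hptw
      rwa [integral_const_mul] at h
    have hI2 : ∫ y in ball x r', v y ^ s ∂μ ≤ ∫ y in ball x R, v y ^ s ∂μ :=
      setIntegral_mono_set (hint R hR le_rfl s hs.le)
        ((ae_restrict_iff' measurableSet_ball).2
          (ae_of_all _ fun y hy => Real.rpow_nonneg (hvpos y hy).le s))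
        (HasSubset.Subset.eventuallyLE (ball_subset_ball hr'R))
    have hμ'0 : 0 < (μ (ball x r')).toReal :=
      ENNReal.toReal_pos (hball r' hr'0 hr'R).1.ne' (hball r' hr'0 hr'R).2.ne
    have hμR0 : 0 < (μ (ball x R)).toReal :=
      ENNReal.toReal_pos (hball R hR le_rfl).1.ne' (hball R hR le_rfl).2.ne
    have hinv : (μ (ball x r')).toReal⁻¹ ≤ (2:ℝ) ^ (n + 1) * (μ (ball x R)).toReal⁻¹ := by
      have hv := hvol (θ (k + 1)) (hθhalf (k + 1)) (hθlt (k + 1))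
      rw [← hr'def] at hv
      have h2n0 : (0:ℝ) < (2:ℝ) ^ (n + 1) := Real.rpow_pos_of_pos two_pos _
      have h1 : 1 / ((2:ℝ) ^ (n + 1) * (μ (ball x r')).toReal) ≤ 1 / (μ (ball x R)).toReal :=
        one_div_le_one_div_of_le hμR0 hv
      calc (μ (ball x r')).toReal⁻¹
          = (2:ℝ) ^ (n + 1) * (1 / ((2:ℝ) ^ (n + 1) * (μ (ball x r')).toReal)) := by
            rw [one_div, mul_inv, ← mul_assoc, mul_inv_cancel₀ h2n0.ne', one_mul]
        _ ≤ (2:ℝ) ^ (n + 1) * (1 / (μ (ball x R)).toReal) :=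
            mul_le_mul_of_nonneg_left h1 h2n0.le
        _ = (2:ℝ) ^ (n + 1) * (μ (ball x R)).toReal⁻¹ := by rw [one_div]
    have hIbound : (μ (ball x r')).toReal⁻¹ * ∫ y in ball x r', v y ^ t ∂μ
        ≤ (2:ℝ) ^ (n + 1) * (Mk (k + 1) ^ (t - s) * Q) := by
      have hInn : 0 ≤ ∫ y in ball x r', v y ^ t ∂μ :=
        setIntegral_nonneg measurableSet_ball
          fun y hy => Real.rpow_nonneg (hvpos y (ball_subset_ball hr'R hy)).le t
      calc (μ (ball x r')).toReal⁻¹ * ∫ y in ball x r', v y ^ t ∂μ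
          ≤ ((2:ℝ) ^ (n + 1) * (μ (ball x R)).toReal⁻¹)
            * (Mk (k + 1) ^ (t - s) * ∫ y in ball x R, v y ^ s ∂μ) := by
            refine mul_le_mul hinv ?_ hInn
              (mul_nonneg (Real.rpow_nonneg (by norm_num) _) (inv_nonneg.2 ENNReal.toReal_nonneg))
            exact hI.trans (mul_le_mul_of_nonneg_left hI2 (Real.rpow_nonneg (hMk0 (k+1)) _))
        _ = (2:ℝ) ^ (n + 1) * (Mk (k + 1) ^ (t - s) * Q) := by
            rw [hQdef]; ring
    -- combine
    have hRHSnn : 0 ≤ a * b ^ k * Mk (k + 1) ^ β * Q ^ (1 / t) :=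
      mul_nonneg (mul_nonneg (mul_nonneg ha0.le (pow_nonneg hb0.le k))
        (Real.rpow_nonneg (hMk0 (k + 1)) β)) (Real.rpow_nonneg hQ0 _)
    refine max_le ?_ hRHSnn
    calc essSup v (μ.restrict (ball x (θ k * R)))
        ≤ (K₁ * (τ / 2 ^ (k + 1)) ^ (-K₂)) ^ (1 / t) *
          ((μ (ball x r')).toReal⁻¹ * ∫ y in ball x r', v y ^ t ∂μ) ^ (1 / t) := h1
      _ ≤ (K₁ * (τ / 2 ^ (k + 1)) ^ (-K₂)) ^ (1 / t) *
          ((2:ℝ) ^ (n + 1) * (Mk (k + 1) ^ (t - s) * Q)) ^ (1 / t) := by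
          refine mul_le_mul_of_nonneg_left
            (Real.rpow_le_rpow ?_ hIbound (by positivity))
            (Real.rpow_nonneg (mul_nonneg hK₁.le (Real.rpow_nonneg hδpos.le _)) _)
          exact mul_nonneg (inv_nonneg.2 ENNReal.toReal_nonneg)
            (setIntegral_nonneg measurableSet_ball
              fun y hy => Real.rpow_nonneg (hvpos y (ball_subset_ball hr'R hy)).le t)
      _ = (K₁ * (τ / 2 ^ (k + 1)) ^ (-K₂)) ^ (1 / t) * ((2:ℝ) ^ (n + 1)) ^ (1 / t)
          * (Mk (k + 1) ^ (t - s)) ^ (1 / t) * Q ^ (1 / t) := by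
          rw [Real.mul_rpow (by positivity) (mul_nonneg (Real.rpow_nonneg (hMk0 (k+1)) _) hQ0),
            Real.mul_rpow (Real.rpow_nonneg (hMk0 (k+1)) _) hQ0]
          ring
      _ = (K₁ * (τ / 2 ^ (k + 1)) ^ (-K₂)) ^ (1 / t) * ((2:ℝ) ^ (n + 1)) ^ (1 / t)
          * Mk (k + 1) ^ β * Q ^ (1 / t) := by
          rw [← Real.rpow_mul (hMk0 (k + 1))]
          congr 3
          rw [hβdef]
          field_simp
      _ ≤ a * b ^ k * Mk (k + 1) ^ β * Q ^ (1 / t) := by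
          refine mul_le_mul_of_nonneg_right (mul_le_mul_of_nonneg_right (hA k)
            (Real.rpow_nonneg (hMk0 (k + 1)) β)) (Real.rpow_nonneg hQ0 _)
  -- apply the iteration lemma
  have hmain := aux_iter a b β (1 / t) Q Mstar Mk ha hb hβ0 hβ1 (by positivity) hQ0 hMstar1
    hMk0 hMks hstep
  have hθ0 : θ 0 = 4 / 5 - τ := by rw [hθdef]; norm_num
  have hexp : 1 / t * (1 - β)⁻¹ = 1 / s := by
    rw [hβdef]
    field_simp
    rw [sub_sub_cancel, div_self hs.ne']
  rw [hexp] at hmain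
  calc essSup v (μ.restrict (ball x ((4 / 5 - τ) * R)))
      ≤ Mk 0 := by rw [hMkdef]; dsimp only; rw [hθ0]; exact le_max_left _ _
    _ ≤ a ^ (1 - β)⁻¹ * b ^ (β / (1 - β) ^ 2) * Q ^ (1 / s) := hmain
    _ = _ := by rw [hQdef]
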